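/- Let φ : ℝ × (0, ∞) → ℝ be an arbitrary real-valued function. Then for all r > 0 and all (s,r) with φ(s,r) > 0, 1/( 2φ(s,r) + 2·K_{n=1}^∞ (n²r²/φ(s,r)) ) = (1/r)·∫_0^1 x^{φ(s,r)/r}/(1+x²) dx, where φ(s,r) + K_{n=1}^∞ (n²r²/φ(s,r)) denotes the limit of the convergents of the generalized continued fraction with integer part φ(s,r), partial numerators a_n = n²r² and partial denominators b_n = φ(s,r). -/

import Mathlib

open MeasureTheory

noncomputable def Haux (u : ℝ) (n : ℕ) : ℝ :=
  ∫ x in (0:ℝ)..1, x ^ u * (1 - x^2)^n / (1 + x^2)^(n+1)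

private lemma haux_cont (u : ℝ) (hu : 0 < u) (n : ℕ) :
    ContinuousOn (fun x : ℝ => x ^ u * (1 - x^2)^n / (1 + x^2)^(n+1)) (Set.uIcc (0:ℝ) 1) := by
  apply ContinuousOn.div
  · have h1 : ContinuousOn (fun x : ℝ => x ^ u) (Set.uIcc (0:ℝ) 1) :=
      fun x _ => (Real.continuousAt_rpow_const x u (Or.inr hu.le)).continuousWithinAt
    exact h1.mul (Continuous.continuousOn (by continuity))
  · exact Continuous.continuousOn (by continuity)
  · intro x _; positivity

private lemma haux_integrable (u : ℝ) (hu : 0 < u) (n : ℕ) :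
    IntervalIntegrable (fun x : ℝ => x ^ u * (1 - x^2)^n / (1 + x^2)^(n+1)) volume 0 1 :=
  (haux_cont u hu n).intervalIntegrable

private lemma haux_pos (u : ℝ) (hu : 0 < u) (n : ℕ) : 0 < Haux u n := by
  apply intervalIntegral.intervalIntegral_pos_of_pos_on (haux_integrable u hu n) _ one_pos
  intro x hx
  have h0 : 0 < x ^ u := Real.rpow_pos_of_pos hx.1 u
  have h2 : 0 < 1 - x^2 := by nlinarith [hx.1, hx.2]
  positivity

private lemma haux_rec1 (u : ℝ) (hu : 0 < u) : 2*u*Haux u 0 + 2*Haux u 1 = 1 := by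
  set f0 : ℝ → ℝ := fun x => x ^ u * (1 - x^2)^0 / (1 + x^2)^(0+1) with hf0
  set f1 : ℝ → ℝ := fun x => x ^ u * (1 - x^2)^1 / (1 + x^2)^(1+1) with hf1
  have hF : ∀ x ∈ Set.Ioo (0:ℝ) 1, HasDerivAt (fun y : ℝ => y ^ u * (2*y) / (1 + y^2))
      (2*u*f0 x + 2*f1 x) x := by
    intro x hx
    have hx0 : (0:ℝ) < x := hx.1
    have h1 : HasDerivAt (fun y : ℝ => y ^ u) (u * x ^ (u-1)) x :=
      Real.hasDerivAt_rpow_const (Or.inl hx0.ne')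
    have h2 : HasDerivAt (fun y : ℝ => 2*y) 2 x := by
      simpa using (hasDerivAt_id x).const_mul (2:ℝ)
    have hden : HasDerivAt (fun y : ℝ => 1 + y^2) (2*x) x := by
      simpa using (hasDerivAt_pow 2 x).const_add (1:ℝ)
    have hd := (h1.fun_mul h2).fun_div hden (by positivity : (1:ℝ) + x^2 ≠ 0)
    refine hd.congr_deriv (Eq.symm ?_)
    have hxu : x ^ (u-1) = x ^ u / x := by
      rw [Real.rpow_sub hx0, Real.rpow_one]
    rw [hf0, hf1]
    simp only []
    rw [hxu]
    have hne : (1:ℝ) + x^2 ≠ 0 := by positivity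
    field_simp
    ring
  have hcont : ContinuousOn (fun y : ℝ => y ^ u * (2*y) / (1 + y^2)) (Set.Icc (0:ℝ) 1) := by
    apply ContinuousOn.div
    · have h1 : ContinuousOn (fun y : ℝ => y ^ u) (Set.Icc (0:ℝ) 1) :=
        fun x _ => (Real.continuousAt_rpow_const x u (Or.inr hu.le)).continuousWithinAt
      exact h1.mul (Continuous.continuousOn (by continuity))
    · exact Continuous.continuousOn (by continuity)
    · intro x _; positivity
  have hint : IntervalIntegrable (fun x => 2*u*f0 x + 2*f1 x) volume 0 1 :=
    ((haux_integrable u hu 0).const_mul (2*u)).add ((haux_integrable u hu 1).const_mul 2)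
  have h := intervalIntegral.integral_eq_sub_of_hasDeriv_right_of_le zero_le_one hcont
    (fun x hx => (hF x hx).hasDerivWithinAt) hint
  have hb : (fun y : ℝ => y ^ u * (2*y) / (1 + y^2)) 1 - (fun y : ℝ => y ^ u * (2*y) / (1 + y^2)) 0 = 1 := by
    norm_num [Real.one_rpow]
  rw [hb] at h
  rw [intervalIntegral.integral_add ((haux_integrable u hu 0).const_mul (2*u))
    ((haux_integrable u hu 1).const_mul 2), intervalIntegral.integral_const_mul,
    intervalIntegral.integral_const_mul] at h
  simpa [Haux, hf0, hf1] using h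

private lemma haux_rec2 (u : ℝ) (hu : 0 < u) (n : ℕ) :
    u * Haux u (n+1) + ((n:ℝ)+2) * Haux u (n+2) = ((n:ℝ)+1) * Haux u n := by
  set fm : ℕ → ℝ → ℝ := fun m x => x ^ u * (1 - x^2)^m / (1 + x^2)^(m+1) with hfm
  have hF : ∀ x ∈ Set.Ioo (0:ℝ) 1,
      HasDerivAt (fun y : ℝ => y ^ u * ((1 - y^2)^(n+1) * (2*y)) / (1 + y^2)^(n+2))
      (2*u*fm (n+1) x + (2*((n:ℝ)+2))*fm (n+2) x - (2*((n:ℝ)+1))*fm n x) x := by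
    intro x hx
    have hx0 : (0:ℝ) < x := hx.1
    have h1 : HasDerivAt (fun y : ℝ => y ^ u) (u * x ^ (u-1)) x :=
      Real.hasDerivAt_rpow_const (Or.inl hx0.ne')
    have hp : HasDerivAt (fun y : ℝ => 1 - y^2) (-(2*x)) x := by
      have := ((hasDerivAt_pow 2 x).neg).const_add (1:ℝ)
      simpa [sub_eq_add_neg] using this
    have hpow : HasDerivAt (fun y : ℝ => (1 - y^2)^(n+1))
        (((n:ℝ)+1) * (1 - x^2)^n * (-(2*x))) x := by
      have := hp.fun_pow (n+1)
      simpa using this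
    have h2 : HasDerivAt (fun y : ℝ => 2*y) 2 x := by
      simpa using (hasDerivAt_id x).const_mul (2:ℝ)
    have hnum := h1.fun_mul (hpow.fun_mul h2)
    have hden : HasDerivAt (fun y : ℝ => (1 + y^2)^(n+2))
        (((n:ℝ)+2) * (1 + x^2)^(n+1) * (2*x)) x := by
      have hb : HasDerivAt (fun y : ℝ => 1 + y^2) (2*x) x := by
        simpa using (hasDerivAt_pow 2 x).const_add (1:ℝ)
      have := hb.fun_pow (n+2)
      simpa using this
    have hd := hnum.fun_div hden (by positivity : (1+x^2)^(n+2) ≠ 0)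
    refine hd.congr_deriv (Eq.symm ?_)
    have hxu : x ^ (u-1) = x ^ u / x := by
      rw [Real.rpow_sub hx0, Real.rpow_one]
    rw [hfm]
    simp only []
    rw [hxu]
    have hne : (1:ℝ) + x^2 ≠ 0 := by positivity
    field_simp
    ring
  have hcont : ContinuousOn (fun y : ℝ => y ^ u * ((1 - y^2)^(n+1) * (2*y)) / (1 + y^2)^(n+2))
      (Set.Icc (0:ℝ) 1) := by
    apply ContinuousOn.div
    · have h1 : ContinuousOn (fun y : ℝ => y ^ u) (Set.Icc (0:ℝ) 1) :=
        fun x _ => (Real.continuousAt_rpow_const x u (Or.inr hu.le)).continuousWithinAt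
      exact h1.mul (Continuous.continuousOn (by continuity))
    · exact Continuous.continuousOn (by continuity)
    · intro x _; positivity
  have i1 := (haux_integrable u hu (n+1)).const_mul (2*u)
  have i2 := (haux_integrable u hu (n+2)).const_mul (2*((n:ℝ)+2))
  have i3 := (haux_integrable u hu n).const_mul (2*((n:ℝ)+1))
  have hint : IntervalIntegrable
      (fun x => 2*u*fm (n+1) x + (2*((n:ℝ)+2))*fm (n+2) x - (2*((n:ℝ)+1))*fm n x) volume 0 1 :=
    (i1.add i2).sub i3
  have h := intervalIntegral.integral_eq_sub_of_hasDeriv_right_of_le zero_le_one hcont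
    (fun x hx => (hF x hx).hasDerivWithinAt) hint
  have hb : (fun y : ℝ => y ^ u * ((1 - y^2)^(n+1) * (2*y)) / (1 + y^2)^(n+2)) 1
      - (fun y : ℝ => y ^ u * ((1 - y^2)^(n+1) * (2*y)) / (1 + y^2)^(n+2)) 0 = 0 := by
    norm_num
  rw [hb] at h
  rw [intervalIntegral.integral_sub (i1.add i2) i3, intervalIntegral.integral_add i1 i2,
    intervalIntegral.integral_const_mul, intervalIntegral.integral_const_mul,
    intervalIntegral.integral_const_mul] at h
  have hH : ∀ m : ℕ, (∫ x in (0:ℝ)..1, fm m x) = Haux u m := fun m => rfl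
  rw [hH, hH, hH] at h
  linarith


open Filter Real

/-- Numerators of the convergents of a generalized continued fraction with
integer part `b₀`, partial numerators `a n` and partial denominators `b n` (for `n ≥ 1`). -/
noncomputable def cfNum (b₀ : ℝ) (a b : ℕ → ℝ) : ℕ → ℝ
  | 0 => b₀
  | 1 => b 1 * b₀ + a 1
  | n + 2 => b (n + 2) * cfNum b₀ a b (n + 1) + a (n + 2) * cfNum b₀ a b n

/-- Denominators of the convergents of a generalized continued fraction. -/
noncomputable def cfDen (a b : ℕ → ℝ) : ℕ → ℝ
  | 0 => 1
  | 1 => b 1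
  | n + 2 => b (n + 2) * cfDen a b (n + 1) + a (n + 2) * cfDen a b n

/-- `IsCFLimit b₀ a b L` means: the convergents of the generalized continued fraction
`b₀ + a 1 / (b 1 + a 2 / (b 2 + ⋯))` tend to `L`. -/
def IsCFLimit (b₀ : ℝ) (a b : ℕ → ℝ) (L : ℝ) : Prop :=
  Filter.Tendsto (fun n => cfNum b₀ a b n / cfDen a b n) Filter.atTop (nhds L)

theorem cf_integral_representation (φ : ℝ → ℝ → ℝ) (s r : ℝ) (hr : 0 < r)
    (hφ : 0 < φ s r) (K : ℝ)
    (hK : IsCFLimit 0 (fun n => (n : ℝ) ^ 2 * r ^ 2) (fun _ => φ s r) K) :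
    1 / (2 * φ s r + 2 * K) =
      (1 / r) * ∫ x in (0 : ℝ)..1, x ^ (φ s r / r) / (1 + x ^ 2) := by
  set t := φ s r with ht
  set u := t / r with hudef
  have hu : 0 < u := div_pos hφ hr
  set a : ℕ → ℝ := fun n => (n : ℝ) ^ 2 * r ^ 2 with ha
  set b : ℕ → ℝ := fun _ => t with hb
  set H : ℕ → ℝ := fun n => Haux u n with hHdef
  have hH : ∀ n, 0 < H n := fun n => haux_pos u hu n
  -- cleared recurrences
  have hur : u * r = t := by rw [hudef, div_mul_cancel₀ t hr.ne']
  have hrec1 : 2*t*H 0 + 2*r*H 1 = r := by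
    have h := haux_rec1 u hu
    simp only [hHdef]
    linear_combination r * h - 2 * Haux u 0 * hur
  have hrec2 : ∀ n : ℕ, t * H (n+1) + r*((n:ℝ)+2) * H (n+2) = r*((n:ℝ)+1) * H n := by
    intro n
    have h := haux_rec2 u hu n
    simp only [hHdef]
    linear_combination r * h - Haux u (n+1) * hur
  set w : ℕ → ℝ := fun n => r * ((n:ℝ)+1) * H (n+1) / H n with hwdef
  have hw : ∀ n, 0 < w n := by
    intro n
    have := hH n; have := hH (n+1)
    have : (0:ℝ) < (n:ℝ)+1 := by positivity
    positivity
  set L : ℝ := w 0 with hLdef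
  set P : ℕ → ℝ := cfNum 0 a b with hP
  set Q : ℕ → ℝ := cfDen a b with hQdef
  have htail : ∀ n : ℕ, w n * (t + w (n+1)) = a (n+1) := by
    intro n
    have h2 := hrec2 n
    have hn := (hH n).ne'
    have hn1 := (hH (n+1)).ne'
    have e1 : t + w (n+1) = r*((n:ℝ)+1)*H n/H (n+1) := by
      rw [hwdef]
      simp only []
      push_cast
      field_simp
      linear_combination hrec2 n
    rw [e1, hwdef, ha]
    simp only []
    push_cast
    field_simp
  have hL0 : L = r * H 1 / H 0 := by rw [hLdef, hwdef]; norm_num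
  clear_value w
  clear hwdef
  have hQpos : ∀ n, 0 < Q n ∧ 0 < Q (n+1) := by
    intro n
    induction n with
    | zero =>
      constructor
      · show (0:ℝ) < cfDen a b 0
        simp [cfDen]
      · show (0:ℝ) < cfDen a b 1
        simp only [cfDen, hb]
        exact hφ
    | succ k ih =>
      refine ⟨ih.2, ?_⟩
      show (0:ℝ) < cfDen a b (k+2)
      have h1 : cfDen a b (k+2) = t * Q (k+1) + a (k+2) * Q k := rfl
      have ha2 : a (k+2) = ((k+2:ℕ):ℝ)^2 * r^2 := rfl
      rw [h1, ha2]
      have := ih.1; have := ih.2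
      have hk : (0:ℝ) ≤ ((k+2:ℕ):ℝ)^2 * r^2 := by positivity
      nlinarith
  have hQ : ∀ n, 0 < Q n := fun n => (hQpos n).1
  have hmain : ∀ n : ℕ, P (n+1) + w (n+1) * P n = L * (Q (n+1) + w (n+1) * Q n) := by
    intro n
    induction n with
    | zero =>
      have hP1 : P 1 = a 1 := by
        show cfNum 0 a b 1 = a 1
        simp [cfNum]
      have hP0 : P 0 = 0 := rfl
      have hQ1 : Q 1 = t := rfl
      have hQ0 : Q 0 = 1 := rfl
      rw [hP1, hP0, hQ1, hQ0, hLdef]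
      have := htail 0
      linear_combination -this
    | succ k ih =>
      have hPk : P (k+2) = t * P (k+1) + a (k+2) * P k := rfl
      have hQk : Q (k+2) = t * Q (k+1) + a (k+2) * Q k := rfl
      rw [hPk, hQk]
      linear_combination (t + w (k+2)) * ih - (P k - L * Q k) * htail (k+1)
  have hsign : ∀ n : ℕ, (L - P (n+1) / Q (n+1)) * (L - P n / Q n) ≤ 0 := by
    intro n
    have h1 := (hQ n).ne'
    have h2 := (hQ (n+1)).ne'
    have key : L * Q (n+1) - P (n+1) = -(w (n+1) * (L * Q n - P n)) := by
      linear_combination -hmain n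
    have e1 : L - P (n+1) / Q (n+1) = (L * Q (n+1) - P (n+1)) / Q (n+1) := by
      field_simp
    have e2 : L - P n / Q n = (L * Q n - P n) / Q n := by
      field_simp
    rw [e1, e2, key]
    have e3 : -(w (n+1) * (L * Q n - P n)) / Q (n+1) * ((L * Q n - P n) / Q n)
        = -(w (n+1) * (L * Q n - P n)^2) / (Q (n+1) * Q n) := by
      ring
    rw [e3]
    apply div_nonpos_of_nonpos_of_nonneg
    · have := hw (n+1)
      nlinarith [sq_nonneg (L * Q n - P n)]
    · exact (mul_pos (hQ (n+1)) (hQ n)).le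
  have hC : Tendsto (fun n => P n / Q n) atTop (nhds K) := hK
  have hC1 : Tendsto (fun n => P (n+1) / Q (n+1)) atTop (nhds K) :=
    hC.comp (tendsto_add_atTop_nat 1)
  have hprod : Tendsto (fun n => (L - P (n+1) / Q (n+1)) * (L - P n / Q n)) atTop
      (nhds ((L - K) * (L - K))) :=
    (tendsto_const_nhds.sub hC1).mul (tendsto_const_nhds.sub hC)
  have hle : (L - K) * (L - K) ≤ 0 := le_of_tendsto hprod (Filter.Eventually.of_forall hsign)
  have hLK : L = K := by nlinarith [sq_nonneg (L - K)]
  -- Final computation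
  have hH0ne := (hH 0).ne'
  have hkey : 2 * t + 2 * K = r / H 0 := by
    rw [← hLK, hL0]
    field_simp
    linear_combination hrec1
  have hint0 : (∫ x in (0:ℝ)..1, x ^ (φ s r / r) / (1 + x ^ 2)) = H 0 := by
    rw [hHdef]
    simp only [Haux, ← ht, ← hudef]
    congr 1
    ext x
    norm_num
  rw [hint0, hkey, one_div_div]
  field_simp
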